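/- Fix an integer k ≥ 1 and let d := ⌊log₂(k+1)⌋. Then the amortized U-MMB membership-proof size of the k-th most recent item, i.e., the limit as N → ∞ of (1/N)·Σ_{n=k}^{k+N−1} σ(k,n), equals d + 3(k+1)/2^{d+1} − 2 if 2^d ≤ k+1 < (3/2)·2^d, and equals d + (k+1)/2^{d+1} − 1/2 if (3/2)·2^d ≤ k+1 < 2^{d+1}. -/

import Mathlib

open Filter

/-- The `i`-th binary digit of `m`. -/
def bit (i m : ℕ) : ℕ := m / 2 ^ i % 2

/-- Position (from 0 at the right) of the mountain of the U-MMB structure on `n` leaves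
containing the `k`-th most recently appended leaf. -/
noncomputable def pos (k n : ℕ) : ℕ :=
  sInf {i : ℕ | k ≤ 2 ^ (i + 1) - 1 + (n + 1) % 2 ^ (i + 1)}

/-- Height of that mountain, i.e. the size in hashes of the leaf's U-MMB membership
proof. -/
noncomputable def mheight (k n : ℕ) : ℕ := pos k n + bit (pos k n) (n + 1)

lemma nat_sInf_eq {P : ℕ → Prop} {n : ℕ} (h1 : P n) (h2 : ∀ m < n, ¬ P m) :
    sInf {i | P i} = n := by
  have hle : sInf {i | P i} ≤ n := Nat.sInf_le h1
  rcases eq_or_lt_of_le hle with h | h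
  · exact h
  · exact absurd (Nat.sInf_mem ⟨n, h1⟩) (h2 _ h)

lemma bit_eq_mod (i m : ℕ) : bit i m = m % 2 ^ (i + 1) / 2 ^ i := by
  rw [pow_succ, Nat.mod_mul_right_div_self]; rfl

lemma bit_mod_pow (i m e : ℕ) (h : i < e) : bit i (m % 2 ^ e) = bit i m := by
  rw [bit_eq_mod, bit_eq_mod, Nat.mod_mod_of_dvd m (pow_dvd_pow 2 h)]

lemma pos_eq (k n d : ℕ) (hd1 : 1 ≤ d) (h1 : 2 ^ d ≤ k + 1) (h2 : k + 1 < 2 ^ (d + 1)) :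
    pos k n = if k + 1 - 2 ^ d ≤ (n + 1) % 2 ^ d then d - 1 else d := by
  have hsmall : ∀ i, i + 2 ≤ d → ¬ (k ≤ 2 ^ (i + 1) - 1 + (n + 1) % 2 ^ (i + 1)) := by
    intro i hi
    have hm : (n + 1) % 2 ^ (i + 1) < 2 ^ (i + 1) := Nat.mod_lt _ (pow_pos (by norm_num) _)
    have h4 : 2 ^ (i + 1) + 2 ^ (i + 1) ≤ 2 ^ d := by
      calc 2 ^ (i + 1) + 2 ^ (i + 1) = 2 ^ (i + 2) := by ring
        _ ≤ 2 ^ d := Nat.pow_le_pow_right (by norm_num) hi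
    omega
  have hmd : (n + 1) % 2 ^ d < 2 ^ d := Nat.mod_lt _ (pow_pos (by norm_num) _)
  have hdd : d - 1 + 1 = d := by omega
  have h2p : 1 ≤ 2 ^ d := Nat.one_le_two_pow
  split_ifs with hc
  · apply nat_sInf_eq
    · show k ≤ 2 ^ (d - 1 + 1) - 1 + (n + 1) % 2 ^ (d - 1 + 1)
      rw [hdd]
      omega
    · intro j hj
      exact hsmall j (by omega)
  · apply nat_sInf_eq
    · show k ≤ 2 ^ (d + 1) - 1 + (n + 1) % 2 ^ (d + 1)
      have : 1 ≤ 2 ^ (d + 1) := Nat.one_le_two_pow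
      omega
    · intro j hj
      rcases Nat.lt_or_ge j (d - 1) with h | h
      · exact hsmall j (by omega)
      · have hj1 : j = d - 1 := by omega
        subst hj1
        rw [hdd]
        omega

/-- Explicit form of `mheight` as a function of `(n+1) % 2^(d+1)`. -/
def Gfun (k d r : ℕ) : ℕ :=
  if k + 1 - 2 ^ d ≤ r % 2 ^ d then d - 1 + bit (d - 1) r else d + bit d r

lemma mheight_eq (k n d : ℕ) (hd1 : 1 ≤ d) (h1 : 2 ^ d ≤ k + 1) (h2 : k + 1 < 2 ^ (d + 1)) :
    mheight k n = Gfun k d ((n + 1) % 2 ^ (d + 1)) := by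
  have hmod : (n + 1) % 2 ^ (d + 1) % 2 ^ d = (n + 1) % 2 ^ d :=
    Nat.mod_mod_of_dvd _ (pow_dvd_pow 2 (by omega))
  rw [mheight, pos_eq k n d hd1 h1 h2, Gfun, hmod]
  split_ifs with hc
  · rw [bit_mod_pow _ _ _ (by omega)]
  · rw [bit_mod_pow _ _ _ (by omega)]

lemma sum_period (G : ℕ → ℕ) (P : ℕ) (hP : 0 < P) (a : ℕ) :
    ∑ m ∈ Finset.Ico a (a + P), G (m % P) = ∑ r ∈ Finset.range P, G r := by
  induction a with
  | zero =>
    rw [zero_add, ← Finset.range_eq_Ico]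
    exact Finset.sum_congr rfl fun r hr => by
      rw [Nat.mod_eq_of_lt (Finset.mem_range.mp hr)]
  | succ a ih =>
    have h1 : ∑ m ∈ Finset.Ico a (a + P), G (m % P)
        = G (a % P) + ∑ m ∈ Finset.Ico (a + 1) (a + P), G (m % P) :=
      Finset.sum_eq_sum_Ico_succ_bot (by omega) _
    have h2 : ∑ m ∈ Finset.Ico (a + 1) (a + 1 + P), G (m % P)
        = ∑ m ∈ Finset.Ico (a + 1) (a + P), G (m % P) + G ((a + P) % P) := by
      rw [show a + 1 + P = a + P + 1 by ring, Finset.sum_Ico_succ_top (by omega)]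
    rw [h2, Nat.add_mod_right, ← ih, h1, add_comm]

lemma cesaro_periodic (f : ℕ → ℕ) (k P S : ℕ) (hP : 0 < P)
    (hper : ∀ a, ∑ n ∈ Finset.Ico a (a + P), f n = S) :
    Tendsto (fun N : ℕ => (N : ℝ)⁻¹ * ∑ n ∈ Finset.Ico k (k + N), (f n : ℝ)) atTop
      (nhds ((S : ℝ) / P)) := by
  set μ : ℝ := (S : ℝ) / P with hμ
  set A : ℕ → ℝ := fun N => ∑ n ∈ Finset.Ico k (k + N), (f n : ℝ) with hA
  set e : ℕ → ℝ := fun N => A N - N * μ with he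
  have hPne : (P : ℝ) ≠ 0 := Nat.cast_ne_zero.mpr (by omega)
  have hPμ : (P : ℝ) * μ = S := by rw [hμ]; field_simp
  have hstep : ∀ N, A (N + P) = A N + S := by
    intro N
    have hcons := Finset.sum_Ico_consecutive (fun n => (f n : ℝ))
      (show k ≤ k + N by omega) (show k + N ≤ k + (N + P) by omega)
    have hseg : ∑ n ∈ Finset.Ico (k + N) (k + (N + P)), (f n : ℝ) = S := by
      rw [show k + (N + P) = (k + N) + P by ring]
      exact_mod_cast congrArg (Nat.cast : ℕ → ℝ) (hper (k + N))
    simp only [hA]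
    rw [← hcons, hseg]
  have heper : ∀ N, e (N + P) = e N := by
    intro N
    simp only [he, hstep N]
    push_cast
    have : ((N : ℝ) + P) * μ = N * μ + S := by rw [add_mul, hPμ]
    linarith [this]
  have hmodp : ∀ N, e N = e (N % P) := by
    intro N
    conv_lhs => rw [← Nat.mod_add_div N P]
    generalize N / P = q
    induction q with
    | zero => simp
    | succ q ih =>
      rw [show N % P + P * (q + 1) = N % P + P * q + P by ring, heper]
      exact ih
  set B : ℝ := ∑ j ∈ Finset.range P, |e j| with hB
  have hbound : ∀ N, |e N| ≤ B := by
    intro N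
    rw [hmodp N]
    exact Finset.single_le_sum (f := fun j => |e j|) (fun j _ => abs_nonneg _)
      (Finset.mem_range.mpr (Nat.mod_lt _ hP))
  have h0 : Tendsto (fun N : ℕ => (N : ℝ)⁻¹ * e N) atTop (nhds 0) := by
    apply squeeze_zero_norm (a := fun N : ℕ => B / N)
    · intro N
      have hN : (0:ℝ) ≤ (N : ℝ)⁻¹ := by positivity
      calc ‖(N : ℝ)⁻¹ * e N‖ = (N : ℝ)⁻¹ * |e N| := by
            rw [norm_mul, norm_inv, Real.norm_natCast, Real.norm_eq_abs]
        _ ≤ (N : ℝ)⁻¹ * B := mul_le_mul_of_nonneg_left (hbound N) hN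
        _ = B / N := by rw [div_eq_mul_inv, mul_comm]
    · exact tendsto_const_div_atTop_nhds_zero_nat B
  have heq : ∀ᶠ N : ℕ in atTop, μ + (N : ℝ)⁻¹ * e N = (N : ℝ)⁻¹ * A N := by
    filter_upwards [eventually_ge_atTop 1] with N hN
    have hN' : (N : ℝ) ≠ 0 := Nat.cast_ne_zero.mpr (by omega)
    simp only [he]
    field_simp
    ring
  have hlim : Tendsto (fun N : ℕ => μ + (N : ℝ)⁻¹ * e N) atTop (nhds (μ + 0)) :=
    tendsto_const_nhds.add h0
  rw [add_zero] at hlim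
  exact Tendsto.congr' heq hlim

lemma bit_low (d s : ℕ) (h : s < 2 ^ d) : bit d s = 0 := by
  rw [bit, Nat.div_eq_of_lt h]

lemma bit_high (d s : ℕ) (h : s < 2 ^ d) : bit d (2 ^ d + s) = 1 := by
  rw [bit, add_comm, Nat.add_div_right _ (pow_pos (by norm_num) _), Nat.div_eq_of_lt h]

lemma bit_pred_high (c s : ℕ) : bit c (2 ^ (c + 1) + s) = bit c s := by
  rw [bit, bit, show (2:ℕ) ^ (c + 1) = 2 ^ c * 2 by ring, add_comm,
    Nat.add_mul_div_left _ _ (pow_pos (by norm_num) _), Nat.add_mod_right]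

lemma bit_pred_eval (c s : ℕ) (h : s < 2 ^ (c + 1)) :
    bit c s = if 2 ^ c ≤ s then 1 else 0 := by
  rw [bit]
  have h2 : (2:ℕ) ^ (c + 1) = 2 ^ c * 2 := by ring
  have hs : s / 2 ^ c < 2 := Nat.div_lt_of_lt_mul (by omega)
  split_ifs with hc
  · have h1' : 1 ≤ s / 2 ^ c := (Nat.one_le_div_iff (pow_pos (by norm_num) _)).mpr hc
    have : s / 2 ^ c = 1 := by omega
    rw [this]
  · rw [Nat.div_eq_of_lt (by omega)]

lemma pair_eval (k c s : ℕ) (h : s < 2 ^ (c + 1)) :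
    Gfun k (c + 1) s + Gfun k (c + 1) (2 ^ (c + 1) + s) =
      if k + 1 - 2 ^ (c + 1) ≤ s then 2 * c + 2 * (if 2 ^ c ≤ s then 1 else 0)
      else 2 * (c + 1) + 1 := by
  have hs1 : s % 2 ^ (c + 1) = s := Nat.mod_eq_of_lt h
  have hs2 : (2 ^ (c + 1) + s) % 2 ^ (c + 1) = s := by
    rw [Nat.add_mod_left, hs1]
  rw [Gfun, Gfun, hs1, hs2, Nat.add_sub_cancel, bit_low (c + 1) s h,
    bit_high (c + 1) s h, bit_pred_high c s, bit_pred_eval c s h]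
  split_ifs with h1 h2 <;> omega
lemma sum_const_Ico (lo hi v : ℕ) (F : ℕ → ℕ) (hF : ∀ s, lo ≤ s → s < hi → F s = v) :
    ∑ s ∈ Finset.Ico lo hi, F s = (hi - lo) * v := by
  calc ∑ s ∈ Finset.Ico lo hi, F s = ∑ _s ∈ Finset.Ico lo hi, v :=
        Finset.sum_congr rfl (fun s hs => by
          rw [Finset.mem_Ico] at hs; exact hF s hs.1 hs.2)
    _ = (hi - lo) * v := by rw [Finset.sum_const, Nat.card_Ico, smul_eq_mul]

lemma sum_pairs (k c : ℕ) :
    ∑ r ∈ Finset.range (2 ^ (c + 1 + 1)), Gfun k (c + 1) r =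
      ∑ s ∈ Finset.range (2 ^ (c + 1)),
        (Gfun k (c + 1) s + Gfun k (c + 1) (2 ^ (c + 1) + s)) := by
  have hp : (1:ℕ) ≤ 2 ^ c := Nat.one_le_two_pow
  have hA : ∑ r ∈ Finset.Ico 0 (2 ^ (c + 1)), Gfun k (c + 1) r =
      ∑ s ∈ Finset.range (2 ^ (c + 1)), Gfun k (c + 1) s := by
    rw [← Finset.range_eq_Ico]
  have hB : ∑ r ∈ Finset.Ico (2 ^ (c + 1)) (2 ^ (c + 1 + 1)), Gfun k (c + 1) r =
      ∑ s ∈ Finset.range (2 ^ (c + 1)), Gfun k (c + 1) (2 ^ (c + 1) + s) := by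
    rw [Finset.sum_Ico_eq_sum_range, show 2 ^ (c + 1 + 1) - 2 ^ (c + 1) = 2 ^ (c + 1) by omega]
  rw [Finset.sum_add_distrib, Finset.range_eq_Ico,
    ← Finset.sum_Ico_consecutive (fun r => Gfun k (c + 1) r) (Nat.zero_le (2 ^ (c + 1)))
      (show 2 ^ (c + 1) ≤ 2 ^ (c + 1 + 1) by omega), hA, hB]

lemma sum_G_case1 (k c : ℕ) (h1 : 2 ^ (c + 1) ≤ k + 1)
    (hc : 2 * (k + 1) < 3 * 2 ^ (c + 1)) :
    ∑ r ∈ Finset.range (2 ^ (c + 1 + 1)), Gfun k (c + 1) r + 2 ^ (c + 3) =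
      2 ^ (c + 2) * (c + 1) + 3 * (k + 1) := by
  have hp : (1:ℕ) ≤ 2 ^ c := Nat.one_le_two_pow
  set a := k + 1 - 2 ^ (c + 1) with hadef
  have hka : k + 1 = a + 2 ^ (c + 1) := by omega
  have haE : a < 2 ^ c := by omega
  rw [sum_pairs]
  have hpt : ∀ s ∈ Finset.range (2 ^ (c + 1)),
      Gfun k (c + 1) s + Gfun k (c + 1) (2 ^ (c + 1) + s) =
        (fun s => if a ≤ s then 2 * c + 2 * (if 2 ^ c ≤ s then 1 else 0)
          else 2 * (c + 1) + 1) s := by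
    intro s hs
    exact pair_eval k c s (Finset.mem_range.mp hs)
  rw [Finset.sum_congr rfl hpt, Finset.range_eq_Ico,
    ← Finset.sum_Ico_consecutive _ (Nat.zero_le a) (show a ≤ 2 ^ (c + 1) by omega),
    ← Finset.sum_Ico_consecutive _ (show a ≤ 2 ^ c by omega)
      (show 2 ^ c ≤ 2 ^ (c + 1) by omega)]
  rw [sum_const_Ico 0 a (2 * (c + 1) + 1) _ (fun s h1s h2s => by rw [if_neg (by omega)]),
    sum_const_Ico a (2 ^ c) (2 * c) _ (fun s h1s h2s => by
      rw [if_pos h1s, if_neg (by omega)]; omega),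
    sum_const_Ico (2 ^ c) (2 ^ (c + 1)) (2 * c + 2) _ (fun s h1s h2s => by
      rw [if_pos (by omega), if_pos h1s])]
  rw [hka]
  have e1 : (2:ℕ) ^ (c + 1) = 2 * 2 ^ c := by ring
  have e2 : (2:ℕ) ^ (c + 2) = 4 * 2 ^ c := by ring
  have e3 : (2:ℕ) ^ (c + 3) = 8 * 2 ^ c := by ring
  rw [e1, e2, e3]
  zify [show a ≤ 2 ^ c from haE.le, show (2:ℕ) ^ c ≤ 2 * 2 ^ c by omega, Nat.sub_zero]
  ring

lemma sum_G_case2 (k c : ℕ) (h2 : k + 1 < 2 ^ (c + 1 + 1))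
    (hc : 3 * 2 ^ (c + 1) ≤ 2 * (k + 1)) :
    ∑ r ∈ Finset.range (2 ^ (c + 1 + 1)), Gfun k (c + 1) r + 2 ^ (c + 1) =
      2 ^ (c + 2) * (c + 1) + (k + 1) := by
  have hp : (1:ℕ) ≤ 2 ^ c := Nat.one_le_two_pow
  set a := k + 1 - 2 ^ (c + 1) with hadef
  have hka : k + 1 = a + 2 ^ (c + 1) := by omega
  have haE : 2 ^ c ≤ a := by omega
  have haE2 : a ≤ 2 ^ (c + 1) := by omega
  rw [sum_pairs]
  have hpt : ∀ s ∈ Finset.range (2 ^ (c + 1)),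
      Gfun k (c + 1) s + Gfun k (c + 1) (2 ^ (c + 1) + s) =
        (fun s => if a ≤ s then 2 * c + 2 * (if 2 ^ c ≤ s then 1 else 0)
          else 2 * (c + 1) + 1) s := by
    intro s hs
    exact pair_eval k c s (Finset.mem_range.mp hs)
  rw [Finset.sum_congr rfl hpt, Finset.range_eq_Ico,
    ← Finset.sum_Ico_consecutive _ (Nat.zero_le a) haE2]
  rw [sum_const_Ico 0 a (2 * (c + 1) + 1) _ (fun s h1s h2s => by rw [if_neg (by omega)]),
    sum_const_Ico a (2 ^ (c + 1)) (2 * c + 2) _ (fun s h1s h2s => by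
      rw [if_pos h1s, if_pos (by omega)])]
  rw [hka]
  have e1 : (2:ℕ) ^ (c + 1) = 2 * 2 ^ c := by ring
  have e2 : (2:ℕ) ^ (c + 2) = 4 * 2 ^ c := by ring
  rw [e1, e2]
  zify [show a ≤ 2 * 2 ^ c by omega, Nat.sub_zero]
  ring

/-- The amortized U-MMB membership-proof size of the `k`-th most recent item, with
`d = ⌊log₂ (k+1)⌋`, equals `d + 3(k+1)/2^(d+1) − 2` when `2^d ≤ k+1 < (3/2)·2^d`, and
`d + (k+1)/2^(d+1) − 1/2` when `(3/2)·2^d ≤ k+1 < 2^(d+1)`. -/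
theorem ummb_amortized_proof_size (k : ℕ) (hk : 1 ≤ k) (d : ℕ)
    (hd : d = Nat.log 2 (k + 1)) :
    (2 ^ d ≤ k + 1 → 2 * (k + 1) < 3 * 2 ^ d →
      Tendsto
        (fun N : ℕ => (N : ℝ)⁻¹ * ∑ n ∈ Finset.Ico k (k + N), (mheight k n : ℝ))
        atTop
        (nhds ((d : ℝ) + 3 * ((k : ℝ) + 1) / 2 ^ (d + 1) - 2))) ∧
    (3 * 2 ^ d ≤ 2 * (k + 1) → k + 1 < 2 ^ (d + 1) →
      Tendsto
        (fun N : ℕ => (N : ℝ)⁻¹ * ∑ n ∈ Finset.Ico k (k + N), (mheight k n : ℝ))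
        atTop
        (nhds ((d : ℝ) + ((k : ℝ) + 1) / 2 ^ (d + 1) - 1 / 2))) := by
  have hk1 : 2 ^ d ≤ k + 1 := hd ▸ Nat.pow_log_le_self 2 (by omega)
  have hk2 : k + 1 < 2 ^ (d + 1) := hd ▸ Nat.lt_pow_succ_log_self (by norm_num) _
  have hd1 : 1 ≤ d := by
    rw [hd]
    exact (Nat.le_log_iff_pow_le (by norm_num) (by omega)).mpr (by simp only [pow_one]; omega)
  obtain ⟨c, rfl⟩ : ∃ c, d = c + 1 := ⟨d - 1, by omega⟩
  set P := 2 ^ (c + 1 + 1) with hPdef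
  have hP : 0 < P := pow_pos (by norm_num) _
  set S := ∑ r ∈ Finset.range P, Gfun k (c + 1) r with hSdef
  have hper : ∀ a, ∑ n ∈ Finset.Ico a (a + P), mheight k n = S := by
    intro a
    calc ∑ n ∈ Finset.Ico a (a + P), mheight k n
        = ∑ n ∈ Finset.Ico a (a + P), Gfun k (c + 1) ((n + 1) % P) :=
          Finset.sum_congr rfl (fun n _ => mheight_eq k n (c + 1) hd1 hk1 hk2)
      _ = ∑ i ∈ Finset.range P, Gfun k (c + 1) ((a + i + 1) % P) := by
          rw [Finset.sum_Ico_eq_sum_range, Nat.add_sub_cancel_left]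
      _ = ∑ i ∈ Finset.range P, Gfun k (c + 1) ((a + 1 + i) % P) :=
          Finset.sum_congr rfl (fun i _ => by rw [show a + i + 1 = a + 1 + i by ring])
      _ = ∑ m ∈ Finset.Ico (a + 1) (a + 1 + P), Gfun k (c + 1) (m % P) := by
          rw [Finset.sum_Ico_eq_sum_range, Nat.add_sub_cancel_left]
      _ = S := sum_period (fun r => Gfun k (c + 1) r) P hP (a + 1)
  have hmain := cesaro_periodic (mheight k) k P S hP hper
  have hPcast : ((P : ℕ) : ℝ) = 2 ^ (c + 1 + 1) := by rw [hPdef]; push_cast; ring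
  constructor
  · intro _ hc
    have hval := sum_G_case1 k c hk1 hc
    have hvalR : (S : ℝ) + 2 ^ (c + 3) = 2 ^ (c + 2) * ((c : ℝ) + 1) + 3 * ((k : ℝ) + 1) := by
      rw [hSdef]
      exact_mod_cast congrArg (Nat.cast : ℕ → ℝ) hval
    have hgoal : (S : ℝ) / (P : ℝ) =
        ((c : ℝ) + 1) + 3 * ((k : ℝ) + 1) / 2 ^ (c + 1 + 1) - 2 := by
      rw [hPcast]
      have hne : (2 : ℝ) ^ (c + 1 + 1) ≠ 0 := by positivity
      have hS : (S : ℝ) = 2 ^ (c + 2) * ((c : ℝ) + 1) + 3 * ((k : ℝ) + 1) - 2 ^ (c + 3) := by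
        linarith [hvalR]
      rw [hS]
      field_simp
      ring
    rw [hgoal] at hmain
    convert hmain using 2
    push_cast
    ring
  · intro hc _
    have hval := sum_G_case2 k c hk2 hc
    have hvalR : (S : ℝ) + 2 ^ (c + 1) = 2 ^ (c + 2) * ((c : ℝ) + 1) + ((k : ℝ) + 1) := by
      rw [hSdef]
      exact_mod_cast congrArg (Nat.cast : ℕ → ℝ) hval
    have hgoal : (S : ℝ) / (P : ℝ) =
        ((c : ℝ) + 1) + ((k : ℝ) + 1) / 2 ^ (c + 1 + 1) - 1 / 2 := by
      rw [hPcast]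
      have hne : (2 : ℝ) ^ (c + 1 + 1) ≠ 0 := by positivity
      have hS : (S : ℝ) = 2 ^ (c + 2) * ((c : ℝ) + 1) + ((k : ℝ) + 1) - 2 ^ (c + 1) := by
        linarith [hvalR]
      rw [hS]
      field_simp
      ring
    rw [hgoal] at hmain
    convert hmain using 2
    push_cast
    ring
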